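/- For every fixed k ≥ 1, the class of P_k-free bipartite permutation graphs is well-quasi-ordered by the induced subgraph relation: for every infinite sequence G_0, G_1, G_2, ... of finite P_k-free bipartite permutation graphs, there exist indices i < j such that G_i is isomorphic to an induced subgraph of G_j. -/

import Mathlib

/-- `H` is (isomorphic to) an induced subgraph of `G`. -/
def IsInducedSubgraph {α β : Type*} (H : SimpleGraph α) (G : SimpleGraph β) : Prop :=
  ∃ f : α → β, Function.Injective f ∧ ∀ u v, G.Adj (f u) (f v) ↔ H.Adj u v

/-- `H` is (isomorphic to) a not necessarily induced subgraph of `G`. -/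
def IsSubgraphOf {α β : Type*} (H : SimpleGraph α) (G : SimpleGraph β) : Prop :=
  ∃ f : α → β, Function.Injective f ∧ ∀ u v, H.Adj u v → G.Adj (f u) (f v)

/-- `G` contains no induced subgraph isomorphic to `H`. -/
def HFree {α β : Type*} (H : SimpleGraph α) (G : SimpleGraph β) : Prop :=
  ¬ IsInducedSubgraph H G

/-- A graph is bipartite if its vertex set splits into two independent sets. -/
def IsBipartite {V : Type*} (G : SimpleGraph V) : Prop :=
  ∃ c : V → Bool, ∀ u v, G.Adj u v → c u ≠ c v

/-- The chordless path `P_k` on `k` vertices. -/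
def pathN (k : ℕ) : SimpleGraph (Fin k) :=
  SimpleGraph.fromRel (fun u v => u.val + 1 = v.val)

/-- The chordless cycle `C_4`. -/
def c4 : SimpleGraph (Fin 4) :=
  SimpleGraph.fromRel (fun u v => (u.val, v.val) ∈ [(0,1),(1,2),(2,3),(3,0)])

/-- `Sun_1`: a `C_4` (on 0,1,2,3) with one pendant vertex 4 attached to 0. -/
def sun1 : SimpleGraph (Fin 5) :=
  SimpleGraph.fromRel (fun u v => (u.val, v.val) ∈ [(0,1),(1,2),(2,3),(3,0),(0,4)])

/-- `Sun_4`: a `C_4` (on 0,1,2,3) with pendant vertices 4,5,6,7 attached to 0,1,2,3. -/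
def sun4 : SimpleGraph (Fin 8) :=
  SimpleGraph.fromRel (fun u v =>
    (u.val, v.val) ∈ [(0,1),(1,2),(2,3),(3,0),(0,4),(1,5),(2,6),(3,7)])

/-- `2P_3`: the disjoint union of two chordless paths on 3 vertices. -/
def twoP3 : SimpleGraph (Fin 6) :=
  SimpleGraph.fromRel (fun u v => (u.val, v.val) ∈ [(0,1),(1,2),(3,4),(4,5)])

/-- `S_{1,2,3}`: the 7-vertex tree with one degree-3 vertex (vertex 0) whose three
leaves (1, 3, 6) are at distances 1, 2 and 3 from it. -/
def s123 : SimpleGraph (Fin 7) :=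
  SimpleGraph.fromRel (fun u v => (u.val, v.val) ∈ [(0,1),(0,2),(2,3),(0,4),(4,5),(5,6)])

/-- The bipartite complement of `P_8` (vertices `0..7`, path edges `i (i+1)`,
parts = even vertices / odd vertices): an even and an odd vertex are adjacent
iff they are not consecutive. -/
def p8tilde : SimpleGraph (Fin 8) :=
  SimpleGraph.fromRel (fun u v =>
    u.val % 2 = 0 ∧ v.val % 2 = 1 ∧ u.val + 1 ≠ v.val ∧ v.val + 1 ≠ u.val)

/-- The T-graph `T_π` for a permutation (given as a map) `π` of `Fin n`.
Vertices: `A ⊕ B ⊕ C ⊕ D`, with edges exactly: `a_i b_{π(i)}`; all `c_i d_j`;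
`a_i d_j` for `j ≤ i`; `b_i c_j` for `j ≤ i`. -/
def Tgraph {n : ℕ} (π : Fin n → Fin n) : SimpleGraph (Fin n ⊕ Fin n ⊕ Fin n ⊕ Fin n) :=
  SimpleGraph.fromRel (fun u v =>
    match u, v with
    | Sum.inl i, Sum.inr (Sum.inl j) => π i = j
    | Sum.inr (Sum.inr (Sum.inl _)), Sum.inr (Sum.inr (Sum.inr _)) => True
    | Sum.inl i, Sum.inr (Sum.inr (Sum.inr j)) => j ≤ i
    | Sum.inr (Sum.inl i), Sum.inr (Sum.inr (Sum.inl j)) => j ≤ i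
    | _, _ => False)

/-- The S-graph for witnessing (convex) permutations `μ, ρ` of a biconvex
permutation `π = μ ∘ ρ⁻¹`. Vertices: `A ⊕ B ⊕ C`, edges exactly:
`b_i a_j` for `j ≤ ρ(i)` and `b_i c_j` for `j ≤ μ(i)`. -/
def Sgraph {n : ℕ} (μ ρ : Fin n → Fin n) : SimpleGraph (Fin n ⊕ Fin n ⊕ Fin n) :=
  SimpleGraph.fromRel (fun u v =>
    match u, v with
    | Sum.inr (Sum.inl i), Sum.inl j => j ≤ ρ i
    | Sum.inr (Sum.inl i), Sum.inr (Sum.inr j) => j ≤ μ i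
    | _, _ => False)

/-- The permutation graph of `π`: `i ~ j` iff `(i - j)(π(i) - π(j)) < 0`. -/
def permGraph {n : ℕ} (π : Fin n → Fin n) : SimpleGraph (Fin n) :=
  SimpleGraph.fromRel (fun u v => u < v ∧ π v < π u)

/-- The universal graph `H_{k,n}`: vertex `(i,j)` is adjacent to `(i+1,j')` iff `j' ≤ j`. -/
def Hgraph (k n : ℕ) : SimpleGraph (Fin k × Fin n) :=
  SimpleGraph.fromRel (fun u v => v.1.val = u.1.val + 1 ∧ v.2.val ≤ u.2.val)

/-- Pattern containment of (one-line) sequences: `π` is contained in `ρ` if `ρ` has a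
subsequence order-isomorphic to `π`. -/
def Contained {m n : ℕ} (π : Fin m → ℕ) (ρ : Fin n → ℕ) : Prop :=
  ∃ f : Fin m → Fin n, StrictMono f ∧ ∀ i j, π i ≤ π j ↔ ρ (f i) ≤ ρ (f j)

/-- Value at (1-indexed) position `p` of the one-line notation of the permutation
`π*_n = (4, 2, 6, 1, 8, 3, …, 2j, 2j−5, …, n−1, n−3)` of Section 2.1. -/
def pistarVal (n p : ℕ) : ℕ :=
  if p = 1 then 4
  else if p = 2 then 2
  else if p = n - 1 then n - 1
  else if p = n then n - 3
  else if p % 2 = 1 then p + 3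
  else p - 3

/-- `π*_n` of Section 2.1 as a (0-indexed) sequence of natural numbers. -/
def pistar (n : ℕ) : Fin n → ℕ := fun i => pistarVal n (i.val + 1)

/-- `π*_n` of Section 2.1 as a (0-indexed) map `Fin n → Fin n`. -/
def pistarFin (n : ℕ) : Fin n → Fin n :=
  fun i => ⟨(pistarVal n (i.val + 1) - 1) % n, Nat.mod_lt _ i.pos⟩

/-- Value at (1-indexed) position `p` of the one-line notation of the permutation
`π*_n = (2, 3, 5, 1, …, 2j+3, 2j, …, n, n−4, n−1, n−2)` of Section 2.2. -/
def pi2starVal (n p : ℕ) : ℕ :=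
  if p = 1 then 2
  else if p = 2 then 3
  else if p = 3 then 5
  else if p = 4 then 1
  else if p = n - 3 then n
  else if p = n - 2 then n - 4
  else if p = n - 1 then n - 1
  else if p = n then n - 2
  else if p % 2 = 1 then p + 2
  else p - 2

/-- `π*_n` of Section 2.2 as a (0-indexed) map `Fin n → Fin n`. -/
def pi2starFin (n : ℕ) : Fin n → Fin n :=
  fun i => ⟨(pi2starVal n (i.val + 1) - 1) % n, Nat.mod_lt _ i.pos⟩

/-- Value at (1-indexed) position `p` of the one-line notation of
`ρ*_n = (1, 2, 3, 5, …, n−3, n−1, n, n−2, …, 6, 4)`. -/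
def rhostarVal (n p : ℕ) : ℕ :=
  if p = 1 then 1
  else if p = 2 then 2
  else if p ≤ n / 2 + 1 then 2 * p - 3
  else if p = n / 2 + 2 then n
  else 2 * n - 2 * p + 4

/-- `ρ*_n` as a (0-indexed) map `Fin n → Fin n`. -/
def rhostarFin (n : ℕ) : Fin n → Fin n :=
  fun i => ⟨(rhostarVal n (i.val + 1) - 1) % n, Nat.mod_lt _ i.pos⟩

/-- Value at (1-indexed) position `p` of the one-line notation of
`μ*_n = (2, 3, 5, …, n−3, n, n−1, n−2, n−4, …, 6, 4, 1)`. -/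
def mustarVal (n p : ℕ) : ℕ :=
  if p = 1 then 2
  else if p ≤ n / 2 - 1 then 2 * p - 1
  else if p = n / 2 then n
  else if p = n / 2 + 1 then n - 1
  else if p ≤ n - 1 then 2 * n - 2 * p + 2
  else 1

/-- `μ*_n` as a (0-indexed) map `Fin n → Fin n`. -/
def mustarFin (n : ℕ) : Fin n → Fin n :=
  fun i => ⟨(mustarVal n (i.val + 1) - 1) % n, Nat.mod_lt _ i.pos⟩

/-- A map `ρ : Fin n → Fin n` is convex if for every `i` the set of positions `p`
with `i ≤ ρ p` is a set of consecutive elements. -/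
def IsConvexFun {n : ℕ} (ρ : Fin n → Fin n) : Prop :=
  ∀ i p q r : Fin n, p ≤ q → q ≤ r → i ≤ ρ p → i ≤ ρ r → i ≤ ρ q

/-- A graph is biconvex if it has a bipartition `(X, Xᶜ)` and a linear order
(induced by an injection into `ℕ`) on the vertices such that every neighborhood
of a vertex of `X` is an interval of `Xᶜ` and vice versa. -/
def IsBiconvex {V : Type*} (G : SimpleGraph V) : Prop :=
  ∃ (X : Set V) (f : V → ℕ), Function.Injective f ∧
    (∀ u v, G.Adj u v → (u ∈ X ↔ v ∉ X)) ∧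
    (∀ x ∈ X, ∀ u v w, u ∉ X → v ∉ X → w ∉ X → f u ≤ f v → f v ≤ f w →
      G.Adj x u → G.Adj x w → G.Adj x v) ∧
    (∀ y ∉ X, ∀ u v w, u ∈ X → v ∈ X → w ∈ X → f u ≤ f v → f v ≤ f w →
      G.Adj y u → G.Adj y w → G.Adj y v)

/-- `G` is a permutation graph: isomorphic to `permGraph π` for some permutation `π`. -/
def IsPermutationGraph {V : Type*} (G : SimpleGraph V) : Prop :=
  ∃ (n : ℕ) (π : Fin n → Fin n), Function.Bijective π ∧ Nonempty (G ≃g permGraph π)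

/-- `G` is a `k`-letter graph: there is a partition of the vertices into `p ≤ k`
classes, each a clique or an independent set, and a linear order (an injection
into `ℕ`) such that the edges between any two distinct classes form one of the
four prescribed patterns. -/
def IsKLetterGraph {V : Type*} (k : ℕ) (G : SimpleGraph V) : Prop :=
  ∃ (p : ℕ) (_ : p ≤ k) (P : V → Fin p) (L : V → ℕ), Function.Injective L ∧
    (∀ i : Fin p,
      (∀ u v, P u = i → P v = i → u ≠ v → G.Adj u v) ∨
      (∀ u v, P u = i → P v = i → ¬ G.Adj u v)) ∧
    (∀ i j : Fin p, i ≠ j →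
      (∀ u v, P u = i → P v = j → (G.Adj u v ↔ L u < L v)) ∨
      (∀ u v, P u = i → P v = j → (G.Adj u v ↔ L v < L u)) ∨
      (∀ u v, P u = i → P v = j → G.Adj u v) ∨
      (∀ u v, P u = i → P v = j → ¬ G.Adj u v))

namespace PkAux

open SimpleGraph List

attribute [local instance] Classical.propDecidable

theorem transgen_chain {α : Type*} {r : α → α → Prop} {a b : α} (h : Relation.TransGen r a b) :
    ∃ l, List.Chain r a (l ++ [b]) := by
  induction h with
  | single hab => exact ⟨[], List.chain_cons.2 ⟨hab, List.Chain.nil⟩⟩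
  | @tail b' c hab hbc ih =>
      obtain ⟨l, hl⟩ := ih
      refine ⟨l ++ [b'], ?_⟩
      rw [List.append_assoc]
      exact List.isChain_cons_split.2 ⟨hl, List.chain_cons.2 ⟨hbc, List.Chain.nil⟩⟩

theorem slf_indexmap {α β : Type*} {r : α → β → Prop} {l : List α} {l' : List β}
    (h : List.SublistForall₂ r l l') :
    ∃ f : Fin l.length → Fin l'.length, StrictMono f ∧ ∀ i, r (l.get i) (l'.get (f i)) := by
  induction h with
  | nil => exact ⟨Fin.elim0, fun i => i.elim0, fun i => i.elim0⟩
  | @cons a b l₁ l₂ hr hsl ih =>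
      obtain ⟨f, hf, hfr⟩ := ih
      refine ⟨fun i => Fin.cases (⟨0, Nat.succ_pos _⟩ : Fin (l₂.length + 1))
        (fun j => (f j).succ) i, ?_, ?_⟩
      · intro i i' hii'
        rcases Fin.eq_zero_or_eq_succ i with rfl | ⟨j, rfl⟩
        · rcases Fin.eq_zero_or_eq_succ i' with rfl | ⟨j', rfl⟩
          · exact absurd hii' (lt_irrefl _)
          · simpa using Fin.succ_pos _
        · rcases Fin.eq_zero_or_eq_succ i' with rfl | ⟨j', rfl⟩
          · exact absurd hii' (by simp [Fin.lt_iff_val_lt_val])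
          · simp only [Fin.cases_succ]
            exact Fin.succ_lt_succ_iff.2 (hf (by simpa using hii'))
      · intro i
        rcases Fin.eq_zero_or_eq_succ i with rfl | ⟨j, rfl⟩
        · simpa using hr
        · simpa using hfr j
  | @cons_right a l₁ l₂ hsl ih =>
      obtain ⟨f, hf, hfr⟩ := ih
      exact ⟨fun i => (f i).succ, fun i i' h => Fin.succ_lt_succ_iff.2 (hf h),
        fun i => by simpa using hfr i⟩

section Perm

variable {n : ℕ} (σ : Fin n → Fin n)

def Below (x y : Fin n) : Prop := x < y ∧ σ x < σ y

variable {σ}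

lemma below_trans {x y z : Fin n} (h1 : Below σ x y) (h2 : Below σ y z) : Below σ x z :=
  ⟨h1.1.trans h2.1, h1.2.trans h2.2⟩

lemma adj_iff {x y : Fin n} :
    (permGraph σ).Adj x y ↔ x ≠ y ∧ ((x < y ∧ σ y < σ x) ∨ (y < x ∧ σ x < σ y)) :=
  SimpleGraph.fromRel_adj _ _ _

lemma below_not_adj {x y : Fin n} (h : Below σ x y) : ¬ (permGraph σ).Adj x y := by
  rw [adj_iff]
  rintro ⟨ne, ⟨h1, h2⟩ | ⟨h1, h2⟩⟩
  · exact absurd h.2 (not_lt.2 h2.le)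
  · exact absurd h.1 (not_lt.2 h1.le)

lemma trichotomy (hinj : Function.Injective σ) {x y : Fin n} (hne : x ≠ y) :
    (permGraph σ).Adj x y ∨ Below σ x y ∨ Below σ y x := by
  rcases lt_trichotomy x y with h | h | h
  · rcases lt_trichotomy (σ x) (σ y) with h2 | h2 | h2
    · exact Or.inr (Or.inl ⟨h, h2⟩)
    · exact absurd (hinj h2) hne
    · exact Or.inl (adj_iff.2 ⟨hne, Or.inl ⟨h, h2⟩⟩)
  · exact absurd h hne
  · rcases lt_trichotomy (σ y) (σ x) with h2 | h2 | h2
    · exact Or.inr (Or.inr ⟨h, h2⟩)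
    · exact absurd (hinj h2) hne.symm
    · exact Or.inl (adj_iff.2 ⟨hne, Or.inr ⟨h, h2⟩⟩)

variable (σ) in
noncomputable def base (v : Fin n) : Fin n :=
  (Finset.univ.filter (fun w => (permGraph σ).Reachable v w)).min'
    ⟨v, Finset.mem_filter.2 ⟨Finset.mem_univ v, SimpleGraph.Reachable.refl v⟩⟩

lemma reach_base (v : Fin n) : (permGraph σ).Reachable v (base σ v) := by
  have h := Finset.min'_mem (Finset.univ.filter (fun w => (permGraph σ).Reachable v w))
    ⟨v, Finset.mem_filter.2 ⟨Finset.mem_univ v, SimpleGraph.Reachable.refl v⟩⟩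
  exact (Finset.mem_filter.1 h).2

lemma base_min {v w : Fin n} (h : (permGraph σ).Reachable v w) : base σ v ≤ w :=
  Finset.min'_le _ w (Finset.mem_filter.2 ⟨Finset.mem_univ w, h⟩)

lemma base_le (v : Fin n) : base σ v ≤ v := base_min (SimpleGraph.Reachable.refl v)

lemma base_eq_of_reach {u v : Fin n} (h : (permGraph σ).Reachable u v) :
    base σ u = base σ v :=
  le_antisymm (base_min (h.trans (reach_base v))) (base_min (h.symm.trans (reach_base u)))

lemma base_idem (v : Fin n) : base σ (base σ v) = base σ v :=
  (base_eq_of_reach (reach_base v)).symm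

lemma adj_base {u v : Fin n} (h : (permGraph σ).Adj u v) : base σ u = base σ v :=
  base_eq_of_reach h.reachable

variable (σ) in
noncomputable def lvl (v : Fin n) : ℕ := (permGraph σ).dist (base σ v) v

lemma dist_tri {V : Type*} {G : SimpleGraph V} {u v w : V}
    (h1 : G.Reachable u v) (h2 : G.Reachable v w) :
    G.dist u w ≤ G.dist u v + G.dist v w := by
  obtain ⟨p, hp⟩ := h1.exists_walk_length_eq_dist
  obtain ⟨q, hq⟩ := h2.exists_walk_length_eq_dist
  calc G.dist u w ≤ (p.append q).length := SimpleGraph.dist_le _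
  _ = _ := by rw [SimpleGraph.Walk.length_append, hp, hq]

lemma adj_dist_le {V : Type*} {G : SimpleGraph V} {u v w : V}
    (h2 : G.Adj v w) (h1 : G.Reachable u v) : G.dist u w ≤ G.dist u v + 1 := by
  refine (dist_tri h1 h2.reachable).trans ?_
  have : G.dist v w ≤ 1 := by
    have := SimpleGraph.dist_le (SimpleGraph.Walk.cons h2 SimpleGraph.Walk.nil)
    simpa using this
  omega

theorem below_dist (hinj : Function.Injective σ) :
    ∀ d u v, base σ u = base σ v → (permGraph σ).dist (base σ v) v = d →
      Below σ u v → lvl σ u ≤ d := by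
  intro d
  induction d using Nat.strong_induction_on with
  | _ d ih =>
    intro u v hb hd hB
    rcases Nat.eq_zero_or_pos d with rfl | hdpos
    · exfalso
      have hv : base σ v = v := ((reach_base v).symm.dist_eq_zero_iff).1 hd
      have h1 : base σ u ≤ u := base_le u
      rw [hb, hv] at h1
      exact absurd hB.1 (not_lt.2 h1)
    · have hreach : (permGraph σ).Reachable (base σ v) v := (reach_base v).symm
      rw [lvl, hb]
      set b := base σ v with hbdef
      clear_value b
      obtain ⟨p, hp⟩ := hreach.exists_walk_length_eq_dist
      rw [hd] at hp
      set q := p.reverse with hqdef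
      have hq : q.length = d := by rw [hqdef, SimpleGraph.Walk.length_reverse, hp]
      clear_value q
      cases q with
      | nil => rw [SimpleGraph.Walk.length_nil] at hq; omega
      | @cons _ u' _ h qq =>
        rw [SimpleGraph.Walk.length_cons] at hq
        have hdu' : (permGraph σ).dist b u' ≤ qq.length := by
          have := SimpleGraph.dist_le qq.reverse
          rwa [SimpleGraph.Walk.length_reverse] at this
        have hbu' : base σ u' = b := (adj_base h.symm).trans hbdef.symm
        by_cases hEq : u = u'
        · subst hEq
          omega
        · rcases trichotomy hinj hEq with hA | hBB | hBB
          · have hr : (permGraph σ).Reachable b u' := ⟨qq.reverse⟩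
            have h2 : (permGraph σ).dist b u ≤ (permGraph σ).dist b u' + 1 :=
              adj_dist_le hA.symm hr
            omega
          · have hlt : (permGraph σ).dist (base σ u') u' < d := by rw [hbu']; omega
            have h3 := ih _ hlt u u' (hb.trans hbu'.symm) rfl hBB
            rw [lvl, hb, hbu'] at h3
            omega
          · exact absurd h.symm (below_not_adj (below_trans hBB hB))

lemma below_lvl (hinj : Function.Injective σ) {u v : Fin n}
    (hb : base σ u = base σ v) (hB : Below σ u v) : lvl σ u ≤ lvl σ v :=
  below_dist hinj (lvl σ v) u v hb rfl hB

section Color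

variable {c : Fin n → Bool}

lemma walk_parity (hc : ∀ x y, (permGraph σ).Adj x y → c x ≠ c y) {x y : Fin n}
    (p : (permGraph σ).Walk x y) : (c x = c y) ↔ Even p.length := by
  induction p with
  | nil => simp
  | @cons _ mid _ h q ih =>
    have h1 := hc _ _ h
    have key : ∀ a b d : Bool, a ≠ b → ((a = d) ↔ ¬(b = d)) := by decide
    rw [SimpleGraph.Walk.length_cons, Nat.even_add_one, ← ih, key _ _ _ h1]

lemma lvl_parity (hc : ∀ x y, (permGraph σ).Adj x y → c x ≠ c y) (v : Fin n) :
    (c (base σ v) = c v) ↔ Even (lvl σ v) := by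
  obtain ⟨p, hp⟩ := (reach_base v).symm.exists_walk_length_eq_dist
  rw [lvl, ← hp]
  exact walk_parity hc p

lemma adj_lvl (hc : ∀ x y, (permGraph σ).Adj x y → c x ≠ c y) {u v : Fin n}
    (h : (permGraph σ).Adj u v) : lvl σ u = lvl σ v + 1 ∨ lvl σ v = lvl σ u + 1 := by
  have hb := adj_base h
  have h1 : lvl σ u ≤ lvl σ v + 1 := by
    rw [lvl, lvl, hb]; exact adj_dist_le h.symm (reach_base v).symm
  have h2 : lvl σ v ≤ lvl σ u + 1 := by
    rw [lvl, lvl, ← hb]; exact adj_dist_le h (reach_base u).symm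
  have p1 := lvl_parity hc u
  have p2 := lvl_parity hc v
  have hne := hc _ _ h
  rw [hb] at p1
  have hiff : Even (lvl σ u) ↔ ¬ Even (lvl σ v) := by
    cases hcb : c (base σ v) <;> cases hcu : c u <;> cases hcv : c v <;> simp_all
  rcases Nat.even_or_odd (lvl σ u) with hE | hE
  · have hO := hiff.1 hE
    rw [Nat.even_iff] at hE
    rw [Nat.even_iff] at hO
    omega
  · have hnu : ¬ Even (lvl σ u) := Nat.not_even_iff_odd.2 hE
    have hO : Even (lvl σ v) := by
      by_contra hq
      exact hnu (hiff.2 hq)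
    rw [Nat.even_iff] at hO
    rw [Nat.odd_iff] at hE
    omega

lemma same_lvl_not_adj (hc : ∀ x y, (permGraph σ).Adj x y → c x ≠ c y) {u v : Fin n}
    (hl : lvl σ u = lvl σ v) : ¬ (permGraph σ).Adj u v := by
  intro h
  rcases adj_lvl hc h with h2 | h2 <;> omega

end Color

theorem lvl_lt {k : ℕ} (hfree : HFree (pathN k) (permGraph σ)) (v : Fin n) :
    lvl σ v + 1 < k := by
  by_contra hcon
  push_neg at hcon
  have hreach : (permGraph σ).Reachable (base σ v) v := (reach_base v).symm
  obtain ⟨p, hp⟩ := hreach.exists_walk_length_eq_dist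
  have hlen : k ≤ p.length + 1 := by rw [lvl] at hcon; omega
  have hreachi : ∀ i, (permGraph σ).Reachable (base σ v) (p.getVert i) := by
    intro i
    induction i with
    | zero => rw [SimpleGraph.Walk.getVert_zero]
    | succ i ih =>
      by_cases hi : i < p.length
      · exact ih.trans (p.adj_getVert_succ hi).reachable
      · rw [SimpleGraph.Walk.getVert_of_length_le p (by omega)]
        exact hreach
  have hA : ∀ i, (permGraph σ).dist (base σ v) (p.getVert i) ≤ i := by
    intro i
    induction i with
    | zero => simp [SimpleGraph.Walk.getVert_zero]
    | succ i ih =>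
      by_cases hi : i < p.length
      · exact (adj_dist_le (p.adj_getVert_succ hi) (hreachi i)).trans (by omega)
      · rw [SimpleGraph.Walk.getVert_of_length_le p (by omega : p.length ≤ i + 1)]
        omega
  have hB : ∀ j i, i + j = p.length → (permGraph σ).dist (p.getVert i) v ≤ j := by
    intro j
    induction j with
    | zero =>
      intro i hi
      have : p.getVert i = v := by
        rw [show i = p.length by omega]
        exact p.getVert_length
      rw [this]
      simp
    | succ j ih =>
      intro i hi
      have hi' : i < p.length := by omega
      have h1 := ih (i + 1) (by omega)
      have h2 := p.adj_getVert_succ hi'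
      have hr2 : (permGraph σ).Reachable (p.getVert (i+1)) v :=
        (hreachi (i+1)).symm.trans hreach
      have h3 := dist_tri h2.reachable hr2
      have h4 : (permGraph σ).dist (p.getVert i) (p.getVert (i+1)) ≤ 1 := by
        have := SimpleGraph.dist_le (SimpleGraph.Walk.cons h2 SimpleGraph.Walk.nil)
        simpa using this
      omega
  have hC : ∀ i, i ≤ p.length → (permGraph σ).dist (base σ v) (p.getVert i) = i := by
    intro i hi
    have h1 := hA i
    have h2 := hB (p.length - i) i (by omega)
    have h3 := dist_tri (hreachi i).symm.symm ((hreachi i).symm.trans hreach)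
    rw [← hp] at h3
    omega
  have hAdj : ∀ i j, i ≤ p.length → j ≤ p.length →
      ((permGraph σ).Adj (p.getVert i) (p.getVert j) ↔ (i + 1 = j ∨ j + 1 = i)) := by
    intro i j hi hj
    constructor
    · intro hadj
      have hne : i ≠ j := by
        intro hij
        rw [hij] at hadj
        exact (permGraph σ).irrefl hadj
      have e1 := adj_dist_le hadj (hreachi i)
      have e2 := adj_dist_le hadj.symm (hreachi j)
      rw [hC i hi, hC j hj] at e1 e2
      omega
    · rintro (h | h)
      · rw [← h]
        exact p.adj_getVert_succ (by omega)
      · rw [← h]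
        exact (p.adj_getVert_succ (by omega)).symm
  apply hfree
  refine ⟨fun a => p.getVert a.val, ?_, ?_⟩
  · intro a a' hEq
    have hEq' : p.getVert a.val = p.getVert a'.val := hEq
    have hva : (a : ℕ) ≤ p.length := by have := a.isLt; omega
    have hva' : (a' : ℕ) ≤ p.length := by have := a'.isLt; omega
    have : (a : ℕ) = (a' : ℕ) := by
      rw [← hC a.val hva, ← hC a'.val hva', hEq']
    exact Fin.ext this
  · intro a a'
    have hva : (a : ℕ) ≤ p.length := by have := a.isLt; omega
    have hva' : (a' : ℕ) ≤ p.length := by have := a'.isLt; omega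
    rw [hAdj a.val a'.val hva hva', pathN, SimpleGraph.fromRel_adj]
    constructor
    · rintro (h | h)
      · exact ⟨fun hE => by rw [hE] at h; omega, Or.inl h⟩
      · exact ⟨fun hE => by rw [hE] at h; omega, Or.inr h⟩
    · rintro ⟨hne, h | h⟩
      · exact Or.inl h
      · exact Or.inr h

variable (σ) in
def Arc (x y : Fin n) : Prop :=
  base σ x = base σ y ∧
    ((lvl σ x = lvl σ y ∧ Below σ x y) ∨
     (lvl σ y = lvl σ x + 1 ∧ Below σ x y) ∨
     (lvl σ x = lvl σ y + 1 ∧ (permGraph σ).Adj x y))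

lemma arc_irrefl (x : Fin n) : ¬ Arc σ x x := by
  rintro ⟨-, ⟨-, hB⟩ | ⟨hl, -⟩ | ⟨hl, -⟩⟩
  · exact lt_irrefl _ hB.1
  · omega
  · omega

lemma comp_NE (hinj : Function.Injective σ) {c : Fin n → Bool}
    (hc : ∀ x y, (permGraph σ).Adj x y → c x ≠ c y) {x y z : Fin n}
    (hb : base σ x = base σ y) (hl : lvl σ y = lvl σ x + 1) (hB : Below σ x y)
    (hb' : base σ y = base σ z) (hl' : lvl σ y = lvl σ z + 1)
    (hA : (permGraph σ).Adj y z) : Arc σ x z := by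
  have hne : x ≠ z := by
    rintro rfl
    exact below_not_adj hB hA.symm
  have hnadj : ¬ (permGraph σ).Adj x z := same_lvl_not_adj hc (by omega)
  rcases trichotomy hinj hne with h | h | h
  · exact absurd h hnadj
  · exact ⟨hb.trans hb', Or.inl ⟨by omega, h⟩⟩
  · exact absurd hA.symm (below_not_adj (below_trans h hB))

variable (σ) in
def IsCyc (f : ℕ → Fin n) (m : ℕ) : Prop :=
  0 < m ∧ (∀ i, f (i + m) = f i) ∧ ∀ i, Arc σ (f i) (f (i + 1))

lemma cyc_mod {f : ℕ → Fin n} {m : ℕ} (hm : 0 < m) (hper : ∀ i, f (i + m) = f i) :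
    ∀ i, f i = f (i % m) := by
  intro i
  induction i using Nat.strong_induction_on with
  | _ i ih =>
    by_cases hi : i < m
    · rw [Nat.mod_eq_of_lt hi]
    · push_neg at hi
      have h1 : i - m + m = i := by omega
      calc f i = f (i - m + m) := by rw [h1]
      _ = f (i - m) := hper _
      _ = f ((i - m) % m) := ih _ (by omega)
      _ = f (i % m) := by rw [← Nat.mod_eq_sub_mod hi]

theorem no_cyc (hinj : Function.Injective σ) {c : Fin n → Bool}
    (hc : ∀ x y, (permGraph σ).Adj x y → c x ≠ c y) :
    ∀ m (f : ℕ → Fin n), ¬ IsCyc σ f m := by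
  intro m
  induction m using Nat.strong_induction_on with
  | _ m ih =>
    rintro f ⟨hm, hper, harc⟩
    rcases Nat.lt_or_ge m 2 with hm2 | hm2
    · have hm1 : m = 1 := by omega
      subst hm1
      have h1 : Arc σ (f 0) (f 1) := harc 0
      have h2 : f 1 = f 0 := hper 0
      rw [h2] at h1
      exact arc_irrefl _ h1
    · obtain ⟨imax, hmem, hmax⟩ := Finset.exists_max_image (Finset.range m)
        (fun i => lvl σ (f i)) ⟨0, Finset.mem_range.2 (by omega)⟩
      have hmaxall : ∀ j, lvl σ (f j) ≤ lvl σ (f imax) := by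
        intro j
        rw [cyc_mod (by omega) hper j]
        exact hmax _ (Finset.mem_range.2 (Nat.mod_lt _ (by omega)))
      set i1 := imax + m with hi1def
      have hv : lvl σ (f i1) = lvl σ (f imax) := by rw [hper imax]
      have a1 : Arc σ (f (i1 - 2)) (f (i1 - 1)) := by
        have := harc (i1 - 2)
        rwa [show i1 - 2 + 1 = i1 - 1 by omega] at this
      have a2 : Arc σ (f (i1 - 1)) (f i1) := by
        have := harc (i1 - 1)
        rwa [show i1 - 1 + 1 = i1 by omega] at this
      have a3 : Arc σ (f i1) (f (i1 + 1)) := harc i1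
      have hkey : ∃ i0, Arc σ (f i0) (f (i0 + 2)) := by
        obtain ⟨hb2, hd2⟩ := a2
        rcases hd2 with ⟨hl, hB⟩ | ⟨hl, hB⟩ | ⟨hl, hA⟩
        · obtain ⟨hb1, hd1⟩ := a1
          rcases hd1 with ⟨hl1, hB1⟩ | ⟨hl1, hB1⟩ | ⟨hl1, hA1⟩
          · refine ⟨i1 - 2, ?_⟩
            rw [show i1 - 2 + 2 = i1 by omega]
            exact ⟨hb1.trans hb2, Or.inl ⟨by omega, below_trans hB1 hB⟩⟩
          · refine ⟨i1 - 2, ?_⟩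
            rw [show i1 - 2 + 2 = i1 by omega]
            exact ⟨hb1.trans hb2, Or.inr (Or.inl ⟨by omega, below_trans hB1 hB⟩)⟩
          · exfalso
            have := hmaxall (i1 - 2)
            omega
        · obtain ⟨hb3, hd3⟩ := a3
          rcases hd3 with ⟨hl3, hB3⟩ | ⟨hl3, hB3⟩ | ⟨hl3, hA3⟩
          · refine ⟨i1 - 1, ?_⟩
            rw [show i1 - 1 + 2 = i1 + 1 by omega]
            exact ⟨hb2.trans hb3, Or.inr (Or.inl ⟨by omega, below_trans hB hB3⟩)⟩
          · exfalso
            have := hmaxall (i1 + 1)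
            omega
          · refine ⟨i1 - 1, ?_⟩
            rw [show i1 - 1 + 2 = i1 + 1 by omega]
            exact comp_NE hinj hc hb2 hl hB hb3 hl3 hA3
        · exfalso
          have := hmaxall (i1 - 1)
          omega
      obtain ⟨i0, hcomp⟩ := hkey
      apply ih (m - 1) (by omega) (fun j => f (i0 + 2 + j % (m - 1)))
      refine ⟨by omega, ?_, ?_⟩
      · intro i
        show f (i0 + 2 + (i + (m - 1)) % (m - 1)) = f (i0 + 2 + i % (m - 1))
        rw [Nat.add_mod_right]
      · intro i
        have hqlt : i % (m - 1) < m - 1 := Nat.mod_lt _ (by omega)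
        have hdm := Nat.div_add_mod i (m - 1)
        by_cases hq2 : i % (m - 1) + 1 < m - 1
        · have hstep : (i + 1) % (m - 1) = i % (m - 1) + 1 := by
            have h5 : i + 1 = (m - 1) * (i / (m - 1)) + (i % (m - 1) + 1) := by omega
            rw [h5, Nat.mul_add_mod]
            exact Nat.mod_eq_of_lt hq2
          show Arc σ (f (i0 + 2 + i % (m - 1))) (f (i0 + 2 + (i + 1) % (m - 1)))
          rw [hstep, show i0 + 2 + (i % (m - 1) + 1) = (i0 + 2 + i % (m - 1)) + 1 by omega]
          exact harc _
        · have hq3 : i % (m - 1) + 1 = m - 1 := by omega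
          have hstep : (i + 1) % (m - 1) = 0 := by
            have h5 : i + 1 = (m - 1) * (i / (m - 1) + 1) := by
              rw [Nat.mul_add]
              omega
            rw [h5, Nat.mul_mod_right]
          show Arc σ (f (i0 + 2 + i % (m - 1))) (f (i0 + 2 + (i + 1) % (m - 1)))
          rw [hstep, Nat.add_zero, show i0 + 2 + i % (m - 1) = i0 + m by omega, hper i0]
          exact hcomp

theorem no_transgen (hinj : Function.Injective σ) {c : Fin n → Bool}
    (hc : ∀ x y, (permGraph σ).Adj x y → c x ≠ c y) (x : Fin n) :
    ¬ Relation.TransGen (Arc σ) x x := by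
  intro h
  obtain ⟨l, hch⟩ := transgen_chain h
  replace hch : (∀ h : 0 < (l ++ [x]).length, Arc σ x ((l ++ [x]).get ⟨0, h⟩)) ∧
      ∀ (i : ℕ) (h : i < (l ++ [x]).length - 1),
        Arc σ ((l ++ [x]).get ⟨i, by omega⟩) ((l ++ [x]).get ⟨i + 1, by omega⟩) := by
    have := List.isChain_iff_getElem.1 hch
    exact ⟨fun h => this 0 (by simp), fun i h => this (i + 1) (by simp at h ⊢; omega)⟩
  obtain ⟨h0, hrest⟩ := hch
  have hlen : (l ++ [x]).length = l.length + 1 := by simp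
  set m := l.length + 1 with hmdef
  have h0' : 0 < l.length + 1 → Arc σ x ((l ++ [x]).getD 0 x) := by
    intro hpos
    rw [List.getD_eq_getElem _ _ (by omega)]
    exact h0 (by omega)
  have hrest' : ∀ i, i + 1 < l.length + 1 → Arc σ ((l ++ [x]).getD i x) ((l ++ [x]).getD (i+1) x) := by
    intro i hi
    rw [List.getD_eq_getElem _ _ (by omega), List.getD_eq_getElem _ _ (by omega)]
    exact hrest i (by omega)
  have hlast : (l ++ [x]).getD l.length x = x := by
    rw [List.getD_eq_getElem _ _ (by simp)]
    simp
  apply no_cyc hinj hc m (fun i => if i % m = 0 then x else (l ++ [x]).getD (i % m - 1) x)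
  refine ⟨by omega, ?_, ?_⟩
  · intro i
    simp only [Nat.add_mod_right]
  · intro i
    have hqlt : i % m < m := Nat.mod_lt _ (by omega)
    have hdm := Nat.div_add_mod i m
    by_cases hq0 : i % m = 0
    · by_cases hm1 : m = 1
      · have hstep : (i + 1) % m = 0 := by rw [hm1, Nat.mod_one]
        simp only [hq0, hstep, if_pos]
        have hl0 : l = [] := List.length_eq_zero_iff.1 (by omega)
        subst hl0
        have h00 := h0 (by simp)
        simpa using h00
      · have hstep : (i + 1) % m = 1 := by
          have h5 : i + 1 = m * (i / m) + 1 := by omega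
          rw [h5, Nat.mul_add_mod]
          exact Nat.mod_eq_of_lt (by omega)
        simp only [hq0, hstep, if_pos, if_neg one_ne_zero]
        exact h0' (by omega)
    · by_cases hq2 : i % m + 1 < m
      · have hstep : (i + 1) % m = i % m + 1 := by
          have h5 : i + 1 = m * (i / m) + (i % m + 1) := by omega
          rw [h5, Nat.mul_add_mod]
          exact Nat.mod_eq_of_lt hq2
        simp only [hstep, if_neg hq0, if_neg (by omega : ¬ i % m + 1 = 0)]
        rw [show i % m + 1 - 1 = (i % m - 1) + 1 by omega]
        exact hrest' _ (by omega)
      · have hq3 : i % m + 1 = m := by omega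
        have hstep : (i + 1) % m = 0 := by
          have h5 : i + 1 = m * (i / m + 1) := by
            rw [Nat.mul_add]
            omega
          rw [h5, Nat.mul_mod_right]
        simp only [hstep, if_neg hq0, if_pos]
        have hr := hrest' (i % m - 1) (by omega)
        rw [show i % m - 1 + 1 = l.length by omega, hlast] at hr
        exact hr

variable (σ) in
noncomputable def col (v : Fin n) : ℕ :=
  (Finset.univ.filter (fun w => Relation.TransGen (Arc σ) w v)).card

lemma arc_col (hinj : Function.Injective σ) {c : Fin n → Bool}
    (hc : ∀ x y, (permGraph σ).Adj x y → c x ≠ c y) {x y : Fin n}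
    (h : Arc σ x y) : col σ x < col σ y := by
  apply Finset.card_lt_card
  have hsub : (Finset.univ.filter (fun w => Relation.TransGen (Arc σ) w x)) ⊆
      (Finset.univ.filter (fun w => Relation.TransGen (Arc σ) w y)) := by
    intro z hz
    exact Finset.mem_filter.2 ⟨Finset.mem_univ _, (Finset.mem_filter.1 hz).2.tail h⟩
  rw [Finset.ssubset_iff_of_subset hsub]
  exact ⟨x, Finset.mem_filter.2 ⟨Finset.mem_univ _, Relation.TransGen.single h⟩,
    fun hx => no_transgen hinj hc x (Finset.mem_filter.1 hx).2⟩

variable (σ) in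
noncomputable def key (v : Fin n) : Lex (ℕ × Fin n) := toLex (col σ v, v)

lemma key_inj : Function.Injective (key σ) := by
  intro a b h
  exact congrArg (fun p => (ofLex p).2) h

lemma key_lt_of_arc (hinj : Function.Injective σ) {c : Fin n → Bool}
    (hc : ∀ x y, (permGraph σ).Adj x y → c x ≠ c y) {x y : Fin n}
    (h : Arc σ x y) : key σ x < key σ y := by
  rw [key, key, Prod.Lex.lt_iff]
  exact Or.inl (arc_col hinj hc h)

variable (σ) in
noncomputable def comp (b : Fin n) : Finset (Fin n) :=
  Finset.univ.filter (fun v => base σ v = b)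

variable (σ) in
noncomputable def keys (b : Fin n) : Finset (Lex (ℕ × Fin n)) := (comp σ b).image (key σ)

lemma keys_card (b : Fin n) : (keys σ b).card = (comp σ b).card :=
  Finset.card_image_of_injective _ key_inj

variable (σ) in
noncomputable def vtx (b : Fin n) (r : Fin (comp σ b).card) : Fin n :=
  (ofLex (((keys σ b).orderIsoOfFin (keys_card b) r : Lex (ℕ × Fin n)))).2

lemma vtx_mem (b : Fin n) (r : Fin (comp σ b).card) :
    vtx σ b r ∈ comp σ b ∧
      key σ (vtx σ b r) = ((keys σ b).orderIsoOfFin (keys_card b) r : Lex (ℕ × Fin n)) := by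
  have hm := ((keys σ b).orderIsoOfFin (keys_card b) r).2
  obtain ⟨w, hw, hkey⟩ := Finset.mem_image.1 hm
  have hvw : vtx σ b r = w := by
    rw [vtx, ← hkey]
    rfl
  rw [hvw, hkey]
  exact ⟨hw, rfl⟩

lemma key_vtx_lt_iff (b : Fin n) {r r' : Fin (comp σ b).card} :
    key σ (vtx σ b r) < key σ (vtx σ b r') ↔ r < r' := by
  rw [(vtx_mem b r).2, (vtx_mem b r').2]
  exact Subtype.coe_lt_coe.trans (OrderIso.lt_iff_lt _)

lemma vtx_inj (b : Fin n) : Function.Injective (vtx σ b) := by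
  intro r r' h
  by_contra hne
  rcases lt_or_gt_of_ne hne with h2 | h2
  · have := (key_vtx_lt_iff b).2 h2
    rw [h] at this
    exact lt_irrefl _ this
  · have := (key_vtx_lt_iff b).2 h2
    rw [h] at this
    exact lt_irrefl _ this

lemma vtx_surj (b : Fin n) {w : Fin n} (hw : w ∈ comp σ b) : ∃ r, vtx σ b r = w := by
  have hmem : key σ w ∈ keys σ b := Finset.mem_image_of_mem _ hw
  obtain ⟨r, hr⟩ := ((keys σ b).orderIsoOfFin (keys_card b)).surjective ⟨key σ w, hmem⟩
  refine ⟨r, key_inj (σ := σ) ?_⟩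
  rw [(vtx_mem b r).2, hr]

variable (σ) in
noncomputable def bases : Finset (Fin n) := Finset.univ.filter (fun v => base σ v = v)

variable (σ) in
noncomputable def bvtx (i : Fin (bases σ).card) : Fin n :=
  ((bases σ).orderIsoOfFin rfl i : Fin n)

lemma bvtx_mem (i : Fin (bases σ).card) : bvtx σ i ∈ bases σ :=
  ((bases σ).orderIsoOfFin rfl i).2

lemma bvtx_inj : Function.Injective (bvtx σ) := by
  intro i j h
  have := ((bases σ).orderIsoOfFin rfl).injective (Subtype.ext h)
  exact this

lemma bvtx_surj {b : Fin n} (hb : b ∈ bases σ) : ∃ i, bvtx σ i = b := by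
  obtain ⟨i, hi⟩ := ((bases σ).orderIsoOfFin rfl).surjective ⟨b, hb⟩
  exact ⟨i, congrArg Subtype.val hi⟩

lemma base_mem_bases (v : Fin n) : base σ v ∈ bases σ :=
  Finset.mem_filter.2 ⟨Finset.mem_univ _, base_idem v⟩

lemma mem_comp_iff {b v : Fin n} : v ∈ comp σ b ↔ base σ v = b := by
  rw [comp, Finset.mem_filter]
  simp

variable (σ) in
noncomputable def wordOf (k : ℕ) (hlvl : ∀ v : Fin n, lvl σ v + 1 < k) (b : Fin n) :
    List (Fin k) :=
  List.ofFn (fun r : Fin (comp σ b).card =>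
    (⟨lvl σ (vtx σ b r), by have := hlvl (vtx σ b r); omega⟩ : Fin k))

variable (σ) in
noncomputable def code (k : ℕ) (hlvl : ∀ v : Fin n, lvl σ v + 1 < k) :
    List (List (Fin k)) :=
  List.ofFn (fun i : Fin (bases σ).card => wordOf σ k hlvl (bvtx σ i))

theorem adj_char (hinj : Function.Injective σ) {c : Fin n → Bool}
    (hc : ∀ x y, (permGraph σ).Adj x y → c x ≠ c y) {u v : Fin n} :
    (permGraph σ).Adj u v ↔ base σ u = base σ v ∧
      ((lvl σ u = lvl σ v + 1 ∧ key σ u < key σ v) ∨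
       (lvl σ v = lvl σ u + 1 ∧ key σ v < key σ u)) := by
  constructor
  · intro h
    refine ⟨adj_base h, ?_⟩
    rcases adj_lvl hc h with h2 | h2
    · exact Or.inl ⟨h2, key_lt_of_arc hinj hc ⟨adj_base h, Or.inr (Or.inr ⟨h2, h⟩)⟩⟩
    · exact Or.inr ⟨h2, key_lt_of_arc hinj hc ⟨(adj_base h).symm, Or.inr (Or.inr ⟨h2, h.symm⟩)⟩⟩
  · rintro ⟨hb, ⟨hl, hk⟩ | ⟨hl, hk⟩⟩
    · by_contra hnadj
      have hne : u ≠ v := by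
        rintro rfl
        omega
      rcases trichotomy hinj hne with h | h | h
      · exact hnadj h
      · have := below_lvl hinj hb h
        omega
      · have harc : Arc σ v u := ⟨hb.symm, Or.inr (Or.inl ⟨hl, h⟩)⟩
        exact absurd hk (asymm (key_lt_of_arc hinj hc harc))
    · by_contra hnadj
      have hne : v ≠ u := by
        rintro rfl
        omega
      rcases trichotomy hinj hne with h | h | h
      · exact hnadj h.symm
      · have := below_lvl hinj hb.symm h
        omega
      · have harc : Arc σ u v := ⟨hb, Or.inr (Or.inl ⟨hl, h⟩)⟩
        exact absurd hk (asymm (key_lt_of_arc hinj hc harc))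

lemma vtx_congr {b₁ b₂ : Fin n} (hb : b₁ = b₂) {r₁ : Fin (comp σ b₁).card}
    {r₂ : Fin (comp σ b₂).card} (hr : r₁.1 = r₂.1) : vtx σ b₁ r₁ = vtx σ b₂ r₂ := by
  subst hb
  congr 1
  exact Fin.ext hr

variable (σ) in
noncomputable def vtxD (b : Fin n) (r : ℕ) : Fin n :=
  if h : r < (comp σ b).card then vtx σ b ⟨r, h⟩ else b

lemma vtxD_eq (b : Fin n) {r : ℕ} (h : r < (comp σ b).card) :
    vtxD σ b r = vtx σ b ⟨r, h⟩ := dif_pos h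

lemma word_get_lvl {k : ℕ} {hlvl : ∀ v : Fin n, lvl σ v + 1 < k} (b : Fin n)
    (r0 : Fin (wordOf σ k hlvl b).length) (r1 : Fin (comp σ b).card) (hr : r1.1 = r0.1) :
    ((wordOf σ k hlvl b).get r0).val = lvl σ (vtx σ b r1) := by
  rw [List.get_eq_getElem]
  simp only [wordOf, List.getElem_ofFn]
  exact congrArg (lvl σ) (vtx_congr rfl (by exact hr.symm))

lemma code_get {k : ℕ} {hlvl : ∀ v : Fin n, lvl σ v + 1 < k}
    (i0 : Fin (code σ k hlvl).length) (i1 : Fin (bases σ).card) (hi : i1.1 = i0.1) :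
    (code σ k hlvl).get i0 = wordOf σ k hlvl (bvtx σ i1) := by
  rw [List.get_eq_getElem]
  simp only [code, List.getElem_ofFn]
  congr 2
  exact Fin.ext (by exact hi.symm)

lemma bvtx_symm_apply {b : Fin n} (hb : b ∈ bases σ) :
    bvtx σ (((bases σ).orderIsoOfFin rfl).symm ⟨b, hb⟩) = b := by
  unfold bvtx
  rw [OrderIso.apply_symm_apply]

lemma key_mem_keys {b v : Fin n} (hv : v ∈ comp σ b) : key σ v ∈ keys σ b := by
  unfold keys
  exact Finset.mem_image_of_mem _ hv

lemma code_length {k : ℕ} {hlvl : ∀ v : Fin n, lvl σ v + 1 < k} :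
    (code σ k hlvl).length = (bases σ).card := by
  unfold code
  exact List.length_ofFn

lemma word_length {k : ℕ} {hlvl : ∀ v : Fin n, lvl σ v + 1 < k} (b : Fin n) :
    (wordOf σ k hlvl b).length = (comp σ b).card := by
  unfold wordOf
  exact List.length_ofFn

lemma vtx_symm_apply {b v : Fin n} (hv : v ∈ comp σ b) :
    vtx σ b (((keys σ b).orderIsoOfFin (keys_card b)).symm
      ⟨key σ v, key_mem_keys hv⟩) = v := by
  apply key_inj (σ := σ)
  rw [(vtx_mem _ _).2]
  rw [OrderIso.apply_symm_apply]

end Perm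

attribute [irreducible] base lvl col key comp keys vtx bases bvtx wordOf code vtxD

section Decode

variable {n n' k : ℕ} {σ : Fin n → Fin n} {τ : Fin n' → Fin n'}

set_option maxHeartbeats 1000000 in
theorem decode
    (hinjσ : Function.Injective σ) {cσ : Fin n → Bool}
    (hcσ : ∀ x y, (permGraph σ).Adj x y → cσ x ≠ cσ y)
    (hlvlσ : ∀ v, lvl σ v + 1 < k)
    (hinjτ : Function.Injective τ) {cτ : Fin n' → Bool}
    (hcτ : ∀ x y, (permGraph τ).Adj x y → cτ x ≠ cτ y)
    (hlvlτ : ∀ v, lvl τ v + 1 < k)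
    (h : List.SublistForall₂ (List.SublistForall₂ (· = ·)) (code σ k hlvlσ) (code τ k hlvlτ)) :
    IsInducedSubgraph (permGraph σ) (permGraph τ) := by
  obtain ⟨g, hgmono, hgrel⟩ := slf_indexmap h
  have hLσ : (code σ k hlvlσ).length = (bases σ).card := code_length
  have hLτ : (code τ k hlvlτ).length = (bases τ).card := code_length
  set G2 : Fin (bases σ).card → Fin (bases τ).card :=
    fun i => ⟨(g ⟨i.1, by rw [hLσ]; exact i.2⟩).1,
      by rw [← hLτ]; exact (g ⟨i.1, by rw [hLσ]; exact i.2⟩).2⟩ with hG2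
  have hG2inj : Function.Injective G2 := by
    intro i j hij
    rw [hG2] at hij
    dsimp only at hij
    have hval := congrArg Fin.val hij
    dsimp only at hval
    have h2 := hgmono.injective (Fin.ext hval)
    have h3 := congrArg Fin.val h2
    exact Fin.ext h3
  have hcompemb : ∀ i : Fin (bases σ).card,
      ∃ f : ℕ → ℕ,
        (∀ r, r < (comp σ (bvtx σ i)).card → f r < (comp τ (bvtx τ (G2 i))).card) ∧
        (∀ r s, r < (comp σ (bvtx σ i)).card → s < (comp σ (bvtx σ i)).card →
          (r < s ↔ f r < f s)) ∧
        (∀ r (hr : r < (comp σ (bvtx σ i)).card),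
          lvl σ (vtx σ (bvtx σ i) ⟨r, hr⟩)
            = lvl τ (vtxD τ (bvtx τ (G2 i)) (f r))) := by
    intro i
    set i0 : Fin (code σ k hlvlσ).length := ⟨i.1, by rw [hLσ]; exact i.2⟩ with hi0
    obtain ⟨f0, hf0mono, hf0rel⟩ := slf_indexmap (hgrel i0)
    have hw1 : (code σ k hlvlσ).get i0 = wordOf σ k hlvlσ (bvtx σ i) :=
      code_get i0 i rfl
    have hw2 : (code τ k hlvlτ).get (g i0) = wordOf τ k hlvlτ (bvtx τ (G2 i)) :=
      code_get (g i0) (G2 i) rfl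
    have hl1 : ((code σ k hlvlσ).get i0).length = (comp σ (bvtx σ i)).card := by
      rw [hw1, word_length]
    have hl2 : ((code τ k hlvlτ).get (g i0)).length = (comp τ (bvtx τ (G2 i))).card := by
      rw [hw2, word_length]
    refine ⟨fun r => if hr : r < (comp σ (bvtx σ i)).card then (f0 ⟨r, by rw [hl1]; exact hr⟩).1 else 0,
      ?_, ?_, ?_⟩
    · intro r hr
      dsimp only
      rw [dif_pos hr]
      rw [← hl2]
      exact (f0 ⟨r, by rw [hl1]; exact hr⟩).2
    · intro r s hr hs
      dsimp only
      rw [dif_pos hr, dif_pos hs]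
      constructor
      · intro hrs
        exact hf0mono (show (⟨r, by rw [hl1]; exact hr⟩ : Fin _) < ⟨s, by rw [hl1]; exact hs⟩ from hrs)
      · intro hrs
        rcases lt_trichotomy r s with h2 | h2 | h2
        · exact h2
        · exfalso
          subst h2
          exact lt_irrefl _ hrs
        · exfalso
          have := hf0mono (show (⟨s, by rw [hl1]; exact hs⟩ : Fin _) < ⟨r, by rw [hl1]; exact hr⟩ from h2)
          exact lt_asymm this hrs
    · intro r hr
      have hrel := hf0rel ⟨r, by rw [hl1]; exact hr⟩
      have hfb : (f0 ⟨r, by rw [hl1]; exact hr⟩).1 < (comp τ (bvtx τ (G2 i))).card := by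
        rw [← hl2]; exact (f0 ⟨r, by rw [hl1]; exact hr⟩).2
      dsimp only
      rw [dif_pos hr, vtxD_eq _ hfb]
      have e1 : (((code σ k hlvlσ).get i0).get ⟨r, by rw [hl1]; exact hr⟩).val
          = lvl σ (vtx σ (bvtx σ i) ⟨r, hr⟩) := by
        rw [List.get_of_eq hw1]
        exact word_get_lvl _ _ _ rfl
      have e2 : (((code τ k hlvlτ).get (g i0)).get (f0 ⟨r, by rw [hl1]; exact hr⟩)).val
          = lvl τ (vtx τ (bvtx τ (G2 i)) ⟨(f0 ⟨r, by rw [hl1]; exact hr⟩).1, hfb⟩) := by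
        rw [List.get_of_eq hw2]
        exact word_get_lvl _ _ _ rfl
      rw [← e1, ← e2, hrel]
  choose fmap hfb hfm hfr using hcompemb
  set iOf : Fin n → Fin (bases σ).card :=
    fun v => ((bases σ).orderIsoOfFin rfl).symm ⟨base σ v, base_mem_bases v⟩ with hiOfdef
  have hiOf : ∀ v, bvtx σ (iOf v) = base σ v := by
    intro v
    exact bvtx_symm_apply (base_mem_bases v)
  set rOf : (v : Fin n) → Fin (comp σ (base σ v)).card :=
    fun v => ((keys σ (base σ v)).orderIsoOfFin (keys_card _)).symm
      ⟨key σ v, key_mem_keys (mem_comp_iff.2 rfl)⟩ with hrOfdef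
  have hrOf : ∀ v, vtx σ (base σ v) (rOf v) = v := by
    intro v
    exact vtx_symm_apply (mem_comp_iff.2 rfl)
  have hrOfb : ∀ v, (rOf v).1 < (comp σ (bvtx σ (iOf v))).card := by
    intro v
    rw [hiOf v]
    exact (rOf v).2
  set F : Fin n → Fin n' :=
    fun v => vtxD τ (bvtx τ (G2 (iOf v))) (fmap (iOf v) (rOf v).1) with hFdef
  have hFval : ∀ v, F v = vtx τ (bvtx τ (G2 (iOf v)))
      ⟨fmap (iOf v) (rOf v).1, hfb _ _ (hrOfb v)⟩ :=
    fun v => vtxD_eq _ (hfb _ _ (hrOfb v))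
  have hFbase : ∀ v, base τ (F v) = bvtx τ (G2 (iOf v)) := by
    intro v
    rw [hFval v]
    exact mem_comp_iff.1 (vtx_mem _ _).1
  have hvOf : ∀ v, vtx σ (bvtx σ (iOf v)) ⟨(rOf v).1, hrOfb v⟩ = v :=
    fun v => (vtx_congr (hiOf v) rfl).trans (hrOf v)
  have hFlvl : ∀ v, lvl τ (F v) = lvl σ v := by
    intro v
    have h2 := hfr (iOf v) (rOf v).1 (hrOfb v)
    rw [hvOf v] at h2
    exact h2.symm
  have hbase_of_ii : ∀ u v, iOf u = iOf v → base σ u = base σ v := by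
    intro u v hii
    rw [← hiOf u, ← hiOf v, hii]
  have hii_of_base : ∀ u v, base σ u = base σ v → iOf u = iOf v := by
    intro u v hb
    have h2 : (⟨base σ u, base_mem_bases u⟩ : {x // x ∈ bases σ})
        = ⟨base σ v, base_mem_bases v⟩ := Subtype.ext hb
    exact congrArg (((bases σ).orderIsoOfFin rfl).symm) h2
  have hFkey : ∀ u v, iOf u = iOf v → (key τ (F u) < key τ (F v) ↔ key σ u < key σ v) := by
    intro u v hii
    have hbase := hbase_of_ii u v hii
    have hbv' : F v = vtx τ (bvtx τ (G2 (iOf u)))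
        ⟨fmap (iOf u) (rOf v).1, by rw [hii]; exact hfb _ _ (hrOfb v)⟩ := by
      rw [hFval v]
      refine vtx_congr (by rw [hii]) ?_
      show fmap (iOf v) (rOf v).1 = fmap (iOf u) (rOf v).1
      rw [hii]
    have hrv' : vtx σ (base σ u) ⟨(rOf v).1, by rw [hbase]; exact (rOf v).2⟩ = v :=
      (vtx_congr hbase rfl).trans (hrOf v)
    rw [hFval u, hbv', key_vtx_lt_iff, Fin.mk_lt_mk]
    rw [← hfm (iOf u) (rOf u).1 (rOf v).1 (hrOfb u) (by rw [hii]; exact hrOfb v)]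
    have hk1 : key σ u < key σ v ↔ key σ (vtx σ (base σ u) (rOf u))
        < key σ (vtx σ (base σ u) ⟨(rOf v).1, by rw [hbase]; exact (rOf v).2⟩) := by
      rw [hrOf u, hrv']
    rw [hk1, key_vtx_lt_iff]
    exact Iff.rfl
  refine ⟨F, ?_, ?_⟩
  · intro u v hF
    have hbb : bvtx τ (G2 (iOf u)) = bvtx τ (G2 (iOf v)) := by
      rw [← hFbase u, ← hFbase v, hF]
    have hii : iOf u = iOf v := hG2inj (bvtx_inj hbb)
    have hk : key σ u = key σ v := by
      by_contra hne
      rcases lt_or_gt_of_ne hne with hlt | hlt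
      · have h2 := (hFkey u v hii).2 hlt
        rw [hF] at h2
        exact lt_irrefl _ h2
      · have h2 := (hFkey v u hii.symm).2 hlt
        rw [hF] at h2
        exact lt_irrefl _ h2
    exact key_inj (σ := σ) hk
  · intro u v
    by_cases hbase : base σ u = base σ v
    · have hii := hii_of_base u v hbase
      rw [adj_char hinjτ hcτ, adj_char hinjσ hcσ]
      have hbτ : base τ (F u) = base τ (F v) := by
        rw [hFbase u, hFbase v, hii]
      rw [hFlvl u, hFlvl v, hFkey u v hii, hFkey v u hii.symm]
      simp [hbτ, hbase]
    · constructor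
      · intro hadj
        exfalso
        have hbτ := adj_base hadj
        rw [hFbase u, hFbase v] at hbτ
        exact hbase (hbase_of_ii u v (hG2inj (bvtx_inj hbτ)))
      · intro hadj
        exact absurd (adj_base hadj) hbase

end Decode

theorem isub_trans {α β γ : Type*} {A : SimpleGraph α} {B : SimpleGraph β} {C : SimpleGraph γ}
    (h1 : IsInducedSubgraph A B) (h2 : IsInducedSubgraph B C) : IsInducedSubgraph A C := by
  obtain ⟨f, hf, hf2⟩ := h1; obtain ⟨g2, hg, hg2⟩ := h2
  exact ⟨g2 ∘ f, hg.comp hf, fun u v => (hg2 (f u) (f v)).trans (hf2 u v)⟩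

theorem isub_of_iso {α β : Type*} {A : SimpleGraph α} {B : SimpleGraph β} (e : A ≃g B) :
    IsInducedSubgraph A B :=
  ⟨e, e.injective, fun u v => e.map_rel_iff⟩

theorem pwo_univ_eq (α : Type*) [Finite α] :
    (Set.univ : Set α).PartiallyWellOrderedOn (· = ·) :=
  Set.finite_univ.partiallyWellOrderedOn

theorem main_wqo (k : ℕ)
    (V : ℕ → Type) (inst : ∀ m, Fintype (V m))
    (G : ∀ m, SimpleGraph (V m))
    (hbip : ∀ m, _root_.IsBipartite (G m))
    (hperm : ∀ m, IsPermutationGraph (G m))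
    (hpk : ∀ m, HFree (pathN k) (G m)) :
    ∃ i j, i < j ∧ IsInducedSubgraph (G i) (G j) := by
  choose n σ hbij hiso using hperm
  have iso : ∀ m, G m ≃g permGraph (σ m) := fun m => Classical.choice (hiso m)
  choose cG hcG using hbip
  have hcs : ∀ m, ∀ x y, (permGraph (σ m)).Adj x y →
      (cG m ((iso m).symm x)) ≠ (cG m ((iso m).symm y)) := by
    intro m x y hxy
    exact hcG m _ _ ((iso m).symm.map_rel_iff.2 hxy)
  have hfree : ∀ m, HFree (pathN k) (permGraph (σ m)) := by
    intro m hemb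
    exact hpk m (isub_trans hemb (isub_of_iso (iso m).symm))
  have hlvl : ∀ m v, lvl (σ m) v + 1 < k := fun m v => lvl_lt (hfree m) v
  have pwo1 := Set.PartiallyWellOrderedOn.partiallyWellOrderedOn_sublistForall₂
    (· = ·) (pwo_univ_eq (Fin k))
  haveI : IsPreorder (List (Fin k)) (List.SublistForall₂ (· = ·)) := {}
  have pwo2 := Set.PartiallyWellOrderedOn.partiallyWellOrderedOn_sublistForall₂
    (List.SublistForall₂ (· = ·)) pwo1
  obtain ⟨i, j, hij, hrel⟩ := pwo2.exists_lt (f := fun m => code (σ m) k (hlvl m)) (by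
    intro m
    simp only [Set.mem_setOf_eq, Set.mem_univ, implies_true])
  refine ⟨i, j, hij, ?_⟩
  have hdec := decode (hbij i).injective (hcs i) (hlvl i)
    (hbij j).injective (hcs j) (hlvl j) hrel
  exact isub_trans (isub_trans (isub_of_iso (iso i)) hdec) (isub_of_iso (iso j).symm)

end PkAux

/-- For every fixed `k ≥ 1`, the class of `P_k`-free bipartite
permutation graphs is well-quasi-ordered by the induced subgraph relation. -/
theorem pk_free_bip_perm_wqo (k : ℕ) (hk : 1 ≤ k)
    (V : ℕ → Type) (inst : ∀ m, Fintype (V m))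
    (G : ∀ m, SimpleGraph (V m))
    (hbip : ∀ m, IsBipartite (G m))
    (hperm : ∀ m, IsPermutationGraph (G m))
    (hpk : ∀ m, HFree (pathN k) (G m)) :
    ∃ i j, i < j ∧ IsInducedSubgraph (G i) (G j) :=
  PkAux.main_wqo k V inst G hbip hperm hpk
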